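/- Let N ≥ 1, let q₁,…,q_N be real numbers, let ψ ⊆ {1,…,N}, let k ∈ {0,…,N}, and let j ≠ j' be elements of {1,…,N} with j ∉ ψ and j' ∉ ψ. Define h̃_j = Σ over subsets η ⊆ {1,…,N} with |η| = k, j ∉ η and j' ∈ η of (1/(|ψ\η| + 1))·Π_{ℓ∈η} q_ℓ, and h̃_{j'} = Σ over subsets η with |η| = k, j' ∉ η and j ∈ η of (1/(|ψ\η| + 1))·Π_{ℓ∈η} q_ℓ. Then q_j·h̃_j = q_{j'}·h̃_{j'}. -/
import Mathlib


open Finset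

/-- With `h̃_j` the sum over `η ⊆ {1,…,N}` with `|η| = k`, `j ∉ η`, `j' ∈ η`
of `(1/(|ψ\η|+1))·Π_{ℓ∈η} q_ℓ` (and `h̃_{j'}` defined symmetrically), one has
`q_j·h̃_j = q_{j'}·h̃_{j'}`. -/
theorem stmt_8 (N : ℕ) (hN : 1 ≤ N) (q : Fin N → ℝ) (ψ : Finset (Fin N))
    (k : ℕ) (hk : k ≤ N) (j j' : Fin N) (hjj' : j ≠ j') (hj : j ∉ ψ) (hj' : j' ∉ ψ) :
    q j * ∑ η ∈ Finset.univ.filter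
        (fun η : Finset (Fin N) => η.card = k ∧ j ∉ η ∧ j' ∈ η),
        (1 / (((ψ \ η).card : ℝ) + 1)) * ∏ ℓ ∈ η, q ℓ
      = q j' * ∑ η ∈ Finset.univ.filter
        (fun η : Finset (Fin N) => η.card = k ∧ j' ∉ η ∧ j ∈ η),
        (1 / (((ψ \ η).card : ℝ) + 1)) * ∏ ℓ ∈ η, q ℓ := by
  rw [Finset.mul_sum, Finset.mul_sum]
  refine Finset.sum_bij' (fun η _ => insert j (η.erase j'))
    (fun η _ => insert j' (η.erase j)) ?_ ?_ ?_ ?_ ?_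
  · intro η hη
    simp only [Finset.mem_filter, Finset.mem_univ, true_and] at hη ⊢
    obtain ⟨hcard, hjη, hj'η⟩ := hη
    refine ⟨?_, ?_, Finset.mem_insert_self _ _⟩
    · rw [Finset.card_insert_of_notMem (fun h => hjη (Finset.mem_of_mem_erase h)),
        Finset.card_erase_of_mem hj'η]
      have h1 : 0 < η.card := Finset.card_pos.2 ⟨j', hj'η⟩
      omega
    · simp only [Finset.mem_insert, Finset.mem_erase]
      push_neg
      exact ⟨hjj'.symm, fun h _ => absurd rfl h⟩
  · intro η hη
    simp only [Finset.mem_filter, Finset.mem_univ, true_and] at hη ⊢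
    obtain ⟨hcard, hj'η, hjη⟩ := hη
    refine ⟨?_, ?_, Finset.mem_insert_self _ _⟩
    · rw [Finset.card_insert_of_notMem (fun h => hj'η (Finset.mem_of_mem_erase h)),
        Finset.card_erase_of_mem hjη]
      have h1 : 0 < η.card := Finset.card_pos.2 ⟨j, hjη⟩
      omega
    · simp only [Finset.mem_insert, Finset.mem_erase]
      push_neg
      exact ⟨hjj', fun h _ => absurd rfl h⟩
  · intro η hη
    simp only [Finset.mem_filter, Finset.mem_univ, true_and] at hη
    obtain ⟨_, hjη, hj'η⟩ := hη
    show insert j' ((insert j (η.erase j')).erase j) = η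
    rw [Finset.erase_insert (fun h => hjη (Finset.mem_of_mem_erase h)),
      Finset.insert_erase hj'η]
  · intro η hη
    simp only [Finset.mem_filter, Finset.mem_univ, true_and] at hη
    obtain ⟨_, hj'η, hjη⟩ := hη
    show insert j ((insert j' (η.erase j)).erase j') = η
    rw [Finset.erase_insert (fun h => hj'η (Finset.mem_of_mem_erase h)),
      Finset.insert_erase hjη]
  · intro η hη
    simp only [Finset.mem_filter, Finset.mem_univ, true_and] at hη
    obtain ⟨hcard, hjη, hj'η⟩ := hη
    have hψ : ψ \ η = ψ \ insert j (η.erase j') := by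
      ext x
      simp only [Finset.mem_sdiff, Finset.mem_insert, Finset.mem_erase]
      constructor
      · rintro ⟨hx, hxη⟩
        refine ⟨hx, ?_⟩
        push_neg
        exact ⟨fun h => absurd (h ▸ hx) hj, fun _ h => hxη h⟩
      · rintro ⟨hx, hxη⟩
        push_neg at hxη
        refine ⟨hx, fun h => ?_⟩
        rcases eq_or_ne x j' with rfl | hne
        · exact hj' hx
        · exact hxη.2 hne h
    rw [← hψ]
    have hjnot : j ∉ η.erase j' := fun h => hjη (Finset.mem_of_mem_erase h)
    rw [Finset.prod_insert hjnot, ← Finset.prod_erase_mul η q hj'η]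
    ring
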